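/- For every positive integer n, every primitive n-th root of unity ζ_n in ℂ, and every positive integer r, one has z_n({3}^r; ζ_n) = (1/(n^2·(r+1))) · ( binom(n+2r+1, 3r+2) + (-1)^r · binom(n+r, 3r+2) ) · (1-ζ_n)^{3r}. -/

import Mathlib

open Finset

/-- The set of tuples `(m_1,...,m_r)` with `n > m_1 > m_2 > ... > m_r > 0`. -/
def msets (n r : ℕ) : Finset (Fin r → Fin n) :=
  Finset.univ.filter fun m =>
    (∀ i j : Fin r, i < j → m j < m i) ∧ ∀ i, 0 < (m i : ℕ)

/-- The set of tuples `(m_1,...,m_r)` with `n > m_1 ≥ m_2 ≥ ... ≥ m_r > 0`. -/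
def msetsStar (n r : ℕ) : Finset (Fin r → Fin n) :=
  Finset.univ.filter fun m =>
    (∀ i j : Fin r, i ≤ j → m j ≤ m i) ∧ ∀ i, 0 < (m i : ℕ)

/-- The finite multiple harmonic q-series
`z_n(k_1,…,k_r; q) = Σ_{n > m_1 > … > m_r > 0} Π_i q^{(k_i-1)m_i}/[m_i]_q^{k_i}`,
where `[m]_q = (1-q^m)/(1-q)`. -/
noncomputable def z (n : ℕ) {r : ℕ} (k : Fin r → ℕ) (q : ℂ) : ℂ :=
  ∑ m ∈ msets n r,
    ∏ i, q ^ ((k i - 1) * (m i : ℕ)) / ((1 - q ^ (m i : ℕ)) / (1 - q)) ^ (k i)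

/-- The star version `z*_n(k; q)`, summed over `n > m_1 ≥ … ≥ m_r > 0`. -/
noncomputable def zstar (n : ℕ) {r : ℕ} (k : Fin r → ℕ) (q : ℂ) : ℂ :=
  ∑ m ∈ msetsStar n r,
    ∏ i, q ^ ((k i - 1) * (m i : ℕ)) / ((1 - q ^ (m i : ℕ)) / (1 - q)) ^ (k i)

/-- The modified value `z̄_n(k;q) = (1-q)^{-wt(k)} z_n(k;q)`. -/
noncomputable def zbar (n : ℕ) {r : ℕ} (k : Fin r → ℕ) (q : ℂ) : ℂ :=
  (1 - q)⁻¹ ^ (∑ i, k i) * z n k q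

/-- The modified star value `z̄*_n(k;q) = (1-q)^{-wt(k)} z*_n(k;q)`. -/
noncomputable def zstarbar (n : ℕ) {r : ℕ} (k : Fin r → ℕ) (q : ℂ) : ℂ :=
  (1 - q)⁻¹ ^ (∑ i, k i) * zstar n k q

/-- `I(k,r,s)`: the set of indices (tuples of positive integers) of weight `k`,
depth `r` and height `s`. -/
def indexSet3 (k r s : ℕ) : Finset (Fin r → ℕ) :=
  (Finset.Nat.antidiagonalTuple r k).filter fun a =>
    (∀ i, 1 ≤ a i) ∧ (Finset.univ.filter fun i => 2 ≤ a i).card = s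

/-- `I(k,r)`: the set of indices of weight `k` and depth `r`. -/
def indexSet2 (k r : ℕ) : Finset (Fin r → ℕ) :=
  (Finset.Nat.antidiagonalTuple r k).filter fun a => ∀ i, 1 ≤ a i

/-- The one-variable finite q-multiple polylogarithm
`L_{k_1,…,k_r}^{(n)}(t;q) = Σ_{n > m_1 > … > m_r > 0} t^{m_1} / Π_i (1-q^{m_i})^{k_i}`,
with `L_∅(t) = 1`. -/
noncomputable def Lpoly (n : ℕ) {r : ℕ} (k : Fin r → ℕ) (q t : ℂ) : ℂ :=
  ∑ m ∈ msets n r,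
    ∏ i : Fin r, (if i.val = 0 then t ^ (m i : ℕ) else 1) / (1 - q ^ (m i : ℕ)) ^ (k i)

/-- The star version `L*_{k_1,…,k_r}^{(n)}(t;q)`, summed over `n > m_1 ≥ … ≥ m_r > 0`. -/
noncomputable def LpolyStar (n : ℕ) {r : ℕ} (k : Fin r → ℕ) (q t : ℂ) : ℂ :=
  ∑ m ∈ msetsStar n r,
    ∏ i : Fin r, (if i.val = 0 then t ^ (m i : ℕ) else 1) / (1 - q ^ (m i : ℕ)) ^ (k i)

/-! ### Auxiliary lemmas for the evaluation of `z_n({3}^r; ζ_n)` -/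

section ZnThreesAux

open Polynomial in
private lemma zthree_cubic_roots (x : ℂ) : ∃ a b c : ℂ,
    ∀ t : ℂ, t^3 - (3+x)*t^2 + 3*t - 1 = (t-a)*(t-b)*(t-c) := by
  set P : Cubic ℂ := ⟨1, -(3+x), 3, -1⟩ with hP
  have ha : P.a ≠ 0 := one_ne_zero
  have hs : Polynomial.Splits (P.toPoly.map (RingHom.id ℂ)) := IsAlgClosed.splits _
  obtain ⟨a, b, c, h3⟩ := (Cubic.splits_iff_roots_eq_three ha).mp hs
  refine ⟨a, b, c, fun t => ?_⟩
  have heq := Cubic.eq_prod_three_roots ha h3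
  have h2 := congrArg (Polynomial.eval t) heq
  simp [Cubic.map, Cubic.toPoly, hP] at h2
  ring_nf at h2 ⊢
  linear_combination h2

private lemma zthree_pascal3 (A t : ℕ) : (A+3).choose (t+3) + 3*((A+1).choose (t+3)) =
    3*((A+2).choose (t+3)) + A.choose (t+3) + A.choose t := by
  have h1 := Nat.choose_succ_succ (A) (t)
  have h2 := Nat.choose_succ_succ (A) (t+1)
  have h3 := Nat.choose_succ_succ (A) (t+2)
  have h4 := Nat.choose_succ_succ (A+1) (t+1)
  have h5 := Nat.choose_succ_succ (A+1) (t+2)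
  have h6 := Nat.choose_succ_succ (A+2) (t+2)
  simp only [Nat.succ_eq_add_one] at *
  ring_nf at *
  omega

private lemma zthree_pascal3two (A : ℕ) : (A+3).choose 2 + 3*((A+1).choose 2) =
    3*((A+2).choose 2) + A.choose 2 := by
  have h1 := Nat.choose_succ_succ (A) 1
  have h2 := Nat.choose_succ_succ (A+1) 1
  have h3 := Nat.choose_succ_succ (A+2) 1
  simp only [Nat.succ_eq_add_one, Nat.choose_one_right] at *
  ring_nf at *
  omega

private lemma zthree_pascal3three (A : ℕ) : (A+3).choose 3 + 3*((A+1).choose 3) =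
    3*((A+2).choose 3) + A.choose 3 + 1 := by
  have h := zthree_pascal3 A 0
  simpa using h

/-- coefficients of the generating series of the power sums of the roots -/
private def cP (k i : ℕ) : ℕ := (k+2*i+1).choose (3*i+2) + 3*((k+2*i+1).choose (3*i+3))

/-- coefficients of the generating series of the power sums of the inverse roots -/
private def cQ (k i : ℕ) : ℕ := 2*((k+i).choose (3*i+2)) + 3*((k+i).choose (3*i+3))

private def eCP (k : ℕ) : ℕ → ℕ
  | 0 => 3
  | (i+1) => cP (k+2) i

private def eCQ (k : ℕ) : ℕ → ℕ
  | 0 => 3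
  | (i+1) => cQ (k+1) i

private lemma cP_rec (k i : ℕ) : cP (k+3) i + 3 * cP (k+1) i = 3 * cP (k+2) i + cP k i + eCP k i := by
  cases i with
  | zero =>
      simp only [cP, eCP]
      have h1 := zthree_pascal3two (k+1)
      have h2 := zthree_pascal3three (k+1)
      ring_nf at *
      omega
  | succ i =>
      simp only [cP, eCP]
      have h1 := zthree_pascal3 (k+2*i+3) (3*i+2)
      have h2 := zthree_pascal3 (k+2*i+3) (3*i+3)
      ring_nf at *
      omega

private lemma cQ_rec (k i : ℕ) : cQ (k+3) i + 3 * cQ (k+1) i = 3 * cQ (k+2) i + cQ k i + eCQ k i := by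
  cases i with
  | zero =>
      simp only [cQ, eCQ]
      have h1 := zthree_pascal3two k
      have h2 := zthree_pascal3three k
      ring_nf at *
      omega
  | succ i =>
      simp only [cQ, eCQ]
      have h1 := zthree_pascal3 (k+i+1) (3*i+2)
      have h2 := zthree_pascal3 (k+i+1) (3*i+3)
      ring_nf at *
      omega

private noncomputable def Pa (n : ℕ) (x : ℂ) (k : ℕ) : ℂ := 3 + ∑ i ∈ range n, x^(i+1) * (cP k i : ℂ)
private noncomputable def Qa (n : ℕ) (x : ℂ) (k : ℕ) : ℂ := 3 + ∑ i ∈ range n, (-x)^(i+1) * (cQ k i : ℂ)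

private lemma Pa_rec (N : ℕ) (x : ℂ) (k : ℕ) (h : k + 2 ≤ N) :
    Pa (N+1) x (k+3) = (3+x) * Pa (N+1) x (k+2) - 3 * Pa (N+1) x (k+1) + Pa (N+1) x k := by
  have hx : x * Pa (N+1) x (k+2) = ∑ i ∈ range (N+1), x^(i+1) * (eCP k i : ℂ) := by
    rw [Finset.sum_range_succ' (fun i => x^(i+1) * (eCP k i : ℂ)) N]
    have hz : cP (k+2) N = 0 := by
      have c1 : (k+2+2*N+1).choose (3*N+2) = 0 := Nat.choose_eq_zero_of_lt (by omega)
      have c2 : (k+2+2*N+1).choose (3*N+3) = 0 := Nat.choose_eq_zero_of_lt (by omega)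
      simp [cP, c1, c2]
    rw [Pa, mul_add, Finset.mul_sum, Finset.sum_range_succ, hz]
    simp only [eCP]
    rw [Finset.sum_congr rfl
      (fun i (_ : i ∈ range N) => by ring :
        ∀ i ∈ range N, x * (x^(i+1) * (cP (k+2) i : ℂ)) = x^(i+1+1) * (cP (k+2) i : ℂ))]
    push_cast
    ring
  have hcomb : (∑ i ∈ range (N+1), x^(i+1) * (cP (k+3) i : ℂ))
      + 3 * (∑ i ∈ range (N+1), x^(i+1) * (cP (k+1) i : ℂ))
      = 3 * (∑ i ∈ range (N+1), x^(i+1) * (cP (k+2) i : ℂ))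
        + (∑ i ∈ range (N+1), x^(i+1) * (cP k i : ℂ))
        + (∑ i ∈ range (N+1), x^(i+1) * (eCP k i : ℂ)) := by
    simp only [Finset.mul_sum, ← Finset.sum_add_distrib]
    refine Finset.sum_congr rfl fun i _ => ?_
    have h2 : ((cP (k+3) i : ℂ) + 3 * cP (k+1) i) = 3 * cP (k+2) i + cP k i + eCP k i := by
      exact_mod_cast congrArg (Nat.cast : ℕ → ℂ) (cP_rec k i)
    linear_combination x^(i+1) * h2
  simp only [Pa] at *
  linear_combination hcomb - hx

private lemma Qa_rec (N : ℕ) (x : ℂ) (k : ℕ) (h : k + 2 ≤ N) :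
    Qa (N+1) x (k+3) = 3 * Qa (N+1) x (k+2) - (3+x) * Qa (N+1) x (k+1) + Qa (N+1) x k := by
  have hx : (-x) * Qa (N+1) x (k+1) = ∑ i ∈ range (N+1), (-x)^(i+1) * (eCQ k i : ℂ) := by
    rw [Finset.sum_range_succ' (fun i => (-x)^(i+1) * (eCQ k i : ℂ)) N]
    have hz : cQ (k+1) N = 0 := by
      have c1 : (k+1+N).choose (3*N+2) = 0 := Nat.choose_eq_zero_of_lt (by omega)
      have c2 : (k+1+N).choose (3*N+3) = 0 := Nat.choose_eq_zero_of_lt (by omega)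
      simp [cQ, c1, c2]
    rw [Qa, mul_add, Finset.mul_sum, Finset.sum_range_succ, hz]
    simp only [eCQ]
    rw [Finset.sum_congr rfl
      (fun i (_ : i ∈ range N) => by ring :
        ∀ i ∈ range N, (-x) * ((-x)^(i+1) * (cQ (k+1) i : ℂ)) = (-x)^(i+1+1) * (cQ (k+1) i : ℂ))]
    push_cast
    ring
  have hcomb : (∑ i ∈ range (N+1), (-x)^(i+1) * (cQ (k+3) i : ℂ))
      + 3 * (∑ i ∈ range (N+1), (-x)^(i+1) * (cQ (k+1) i : ℂ))
      = 3 * (∑ i ∈ range (N+1), (-x)^(i+1) * (cQ (k+2) i : ℂ))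
        + (∑ i ∈ range (N+1), (-x)^(i+1) * (cQ k i : ℂ))
        + (∑ i ∈ range (N+1), (-x)^(i+1) * (eCQ k i : ℂ)) := by
    simp only [Finset.mul_sum, ← Finset.sum_add_distrib]
    refine Finset.sum_congr rfl fun i _ => ?_
    have h2 : ((cQ (k+3) i : ℂ) + 3 * cQ (k+1) i) = 3 * cQ (k+2) i + cQ k i + eCQ k i := by
      exact_mod_cast congrArg (Nat.cast : ℕ → ℂ) (cQ_rec k i)
    linear_combination (-x)^(i+1) * h2
  simp only [Qa] at *
  linear_combination hcomb - hx

private lemma Pa_zero (n : ℕ) (x : ℂ) : Pa n x 0 = 3 := by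
  have h : ∀ i : ℕ, cP 0 i = 0 := fun i => by
    have c1 : (2*i+1).choose (3*i+2) = 0 := Nat.choose_eq_zero_of_lt (by omega)
    have c2 : (2*i+1).choose (3*i+3) = 0 := Nat.choose_eq_zero_of_lt (by omega)
    simp [cP, c1, c2]
  simp [Pa, h]

private lemma Pa_one (n : ℕ) (hn : 1 ≤ n) (x : ℂ) : Pa n x 1 = 3 + x := by
  rw [Pa]
  rw [Finset.sum_eq_single_of_mem 0 (Finset.mem_range.2 hn)]
  · norm_num [cP]
  · intro i _ hi
    obtain ⟨i', rfl⟩ : ∃ i', i = i'+1 := ⟨i-1, by omega⟩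
    have c1 : (1+2*(i'+1)+1).choose (3*(i'+1)+2) = 0 := Nat.choose_eq_zero_of_lt (by omega)
    have c2 : (1+2*(i'+1)+1).choose (3*(i'+1)+3) = 0 := Nat.choose_eq_zero_of_lt (by omega)
    simp [cP, c1, c2]

private lemma Pa_two (n : ℕ) (hn : 2 ≤ n) (x : ℂ) : Pa n x 2 = 3 + 6*x + x^2 := by
  rw [Pa, ← Finset.sum_subset (Finset.range_subset_range.2 hn)
    (fun i _ hi => ?_)]
  · rw [Finset.sum_range_succ, Finset.sum_range_one]
    norm_num [cP]
    ring
  · rw [Finset.mem_range] at hi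
    obtain ⟨i', rfl⟩ : ∃ i', i = i'+2 := ⟨i-2, by omega⟩
    have c1 : (2+2*(i'+2)+1).choose (3*(i'+2)+2) = 0 := Nat.choose_eq_zero_of_lt (by omega)
    have c2 : (2+2*(i'+2)+1).choose (3*(i'+2)+3) = 0 := Nat.choose_eq_zero_of_lt (by omega)
    simp [cP, c1, c2]

private lemma Qa_zero (n : ℕ) (x : ℂ) : Qa n x 0 = 3 := by
  have h : ∀ i : ℕ, cQ 0 i = 0 := fun i => by
    have c1 : (i).choose (3*i+2) = 0 := Nat.choose_eq_zero_of_lt (by omega)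
    have c2 : (i).choose (3*i+3) = 0 := Nat.choose_eq_zero_of_lt (by omega)
    simp [cQ, c1, c2]
  simp [Qa, h]

private lemma Qa_one (n : ℕ) (x : ℂ) : Qa n x 1 = 3 := by
  have h : ∀ i : ℕ, cQ 1 i = 0 := fun i => by
    have c1 : (1+i).choose (3*i+2) = 0 := Nat.choose_eq_zero_of_lt (by omega)
    have c2 : (1+i).choose (3*i+3) = 0 := Nat.choose_eq_zero_of_lt (by omega)
    simp [cQ, c1, c2]
  simp [Qa, h]

private lemma Qa_two (n : ℕ) (hn : 1 ≤ n) (x : ℂ) : Qa n x 2 = 3 - 2*x := by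
  rw [Qa]
  rw [Finset.sum_eq_single_of_mem 0 (Finset.mem_range.2 hn)]
  · norm_num [cQ]
    ring
  · intro i _ hi
    obtain ⟨i', rfl⟩ : ∃ i', i = i'+1 := ⟨i-1, by omega⟩
    have c1 : (2+(i'+1)).choose (3*(i'+1)+2) = 0 := Nat.choose_eq_zero_of_lt (by omega)
    have c2 : (2+(i'+1)).choose (3*(i'+1)+3) = 0 := Nat.choose_eq_zero_of_lt (by omega)
    simp [cQ, c1, c2]

end ZnThreesAux

section ZnThreesAux2

open Polynomial in
private lemma zthree_geom_prod (n : ℕ) (hn : 0 < n) (ζ : ℂ) (hζ : IsPrimitiveRoot ζ n) (z : ℂ) :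
    ∏ m ∈ Finset.Ico 1 n, (z - ζ^m) = ∑ i ∈ Finset.range n, z^i := by
  have : NeZero n := ⟨hn.ne'⟩
  have hrange : (∏ m ∈ Finset.range n, (X - C (ζ^m))) = X^n - 1 := by
    rw [Polynomial.X_pow_sub_one_eq_prod hn hζ]
    refine Finset.prod_nbij (fun m => ζ^m) (fun m hm => ?_) (fun m hm m' hm' h => ?_) ?_ (fun m hm => rfl)
    · exact (Polynomial.mem_nthRootsFinset hn _).2 (by rw [← pow_mul, mul_comm, pow_mul, hζ.pow_eq_one, one_pow])
    · exact hζ.pow_inj (Finset.mem_range.1 (by simpa using hm)) (Finset.mem_range.1 (by simpa using hm')) h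
    · intro u hu
      simp only [Finset.coe_range, Set.mem_image]
      obtain ⟨i, hi, hie⟩ := hζ.eq_pow_of_pow_eq_one ((Polynomial.mem_nthRootsFinset hn _).1 (by simpa using hu))
      exact ⟨i, Set.mem_Iio.2 hi, hie⟩
  have hdiff : Finset.range n \ {0} = Finset.Ico 1 n := by
    ext m; simp [Finset.mem_Ico, Finset.mem_range]; omega
  have hsplit : (∏ m ∈ Finset.Ico 1 n, (X - C (ζ^m))) * (X - C 1) = X^n - 1 := by
    rw [← hrange, Finset.prod_eq_prod_diff_singleton_mul (Finset.mem_range.2 hn) (fun m => X - C (ζ^m))]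
    · rw [hdiff]; norm_num
  have hgeo : (∑ i ∈ Finset.range n, (X:ℂ[X])^i) * (X - C 1) = X^n - 1 := by
    simpa using geom_sum_mul (X:ℂ[X]) n
  have hpoly : (∏ m ∈ Finset.Ico 1 n, (X - C (ζ^m))) = ∑ i ∈ Finset.range n, (X:ℂ[X])^i :=
    mul_right_cancel₀ (Polynomial.X_sub_C_ne_zero 1) (hsplit.trans hgeo.symm)
  have := congrArg (Polynomial.eval z) hpoly
  simpa [Polynomial.eval_prod, Polynomial.eval_finset_sum] using this

private lemma zthree_sum_msets (n r : ℕ) (g : ℕ → ℂ) :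
    ∑ m ∈ msets n r, ∏ i, g (m i : ℕ)
      = ∑ s ∈ Finset.powersetCard r (Finset.Ico 1 n), ∏ v ∈ s, g v := by
  classical
  have hmem : ∀ m ∈ msets n r, (∀ i j : Fin r, i < j → m j < m i) ∧ ∀ i, 0 < (m i : ℕ) :=
    fun m hm => (Finset.mem_filter.1 hm).2
  have hinj : ∀ m ∈ msets n r, Function.Injective (fun i => ((m i : ℕ))) := by
    intro m hm i j hij
    simp only [] at hij
    by_contra hne
    rcases lt_or_gt_of_ne hne with h | h
    · exact absurd hij (by have := (hmem m hm).1 i j h; omega)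
    · exact absurd hij (by have := (hmem m hm).1 j i h; omega)
  refine Finset.sum_bij' (fun m _ => Finset.image (fun i => ((m i : ℕ))) Finset.univ)
    (fun s hs i => ⟨s.orderEmbOfFin (Finset.mem_powersetCard.1 hs).2 i.rev, ?_⟩)
    ?_ ?_ ?_ ?_ ?_
  · have h1 := Finset.orderEmbOfFin_mem s (Finset.mem_powersetCard.1 hs).2 i.rev
    have h2 := (Finset.mem_powersetCard.1 hs).1 h1
    exact (Finset.mem_Ico.1 h2).2
  · intro m hm
    rw [Finset.mem_powersetCard]
    constructor
    · intro v hv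
      obtain ⟨i, _, rfl⟩ := Finset.mem_image.1 hv
      exact Finset.mem_Ico.2 ⟨(hmem m hm).2 i, (m i).isLt⟩
    · rw [Finset.card_image_of_injOn ((hinj m hm).injOn)]
      simp
  · intro s hs
    rw [msets, Finset.mem_filter]
    refine ⟨Finset.mem_univ _, fun i j hij => ?_, fun i => ?_⟩
    · show (s.orderEmbOfFin _ j.rev : ℕ) < (s.orderEmbOfFin _ i.rev : ℕ)
      exact (s.orderEmbOfFin _).strictMono (Fin.rev_lt_rev.2 hij)
    · have h1 := Finset.orderEmbOfFin_mem s (Finset.mem_powersetCard.1 hs).2 i.rev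
      have h2 := (Finset.mem_powersetCard.1 hs).1 h1
      exact (Finset.mem_Ico.1 h2).1
  · intro m hm
    funext i
    have hcard : (Finset.image (fun i => ((m i : ℕ))) Finset.univ).card = r := by
      rw [Finset.card_image_of_injOn ((hinj m hm).injOn)]; simp
    have hf : ∀ j : Fin r, (fun j : Fin r => ((m j.rev : ℕ))) j ∈ Finset.image (fun i => ((m i : ℕ))) Finset.univ :=
      fun j => Finset.mem_image.2 ⟨j.rev, Finset.mem_univ _, rfl⟩
    have hmono : StrictMono (fun j : Fin r => ((m j.rev : ℕ))) := by
      intro j j' hjj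
      have := (hmem m hm).1 j'.rev j.rev (Fin.rev_lt_rev.2 hjj)
      exact this
    have huniq := Finset.orderEmbOfFin_unique hcard hf hmono
    apply Fin.ext
    show ((Finset.image (fun i => ((m i : ℕ))) Finset.univ).orderEmbOfFin _ i.rev : ℕ) = (m i : ℕ)
    rw [← congrFun huniq i.rev]
    simp [Fin.rev_rev]
  · intro s hs
    ext y
    simp only [Finset.mem_image, Finset.mem_univ, true_and]
    constructor
    · rintro ⟨i, rfl⟩
      exact Finset.orderEmbOfFin_mem s (Finset.mem_powersetCard.1 hs).2 i.rev
    · intro hy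
      have hr := Finset.range_orderEmbOfFin s (Finset.mem_powersetCard.1 hs).2
      have hy' : y ∈ Set.range (s.orderEmbOfFin (Finset.mem_powersetCard.1 hs).2) := by
        rw [hr]; exact hy
      obtain ⟨i, hi⟩ := hy'
      exact ⟨i.rev, by simp [Fin.rev_rev, hi]⟩
  · intro m hm
    rw [Finset.prod_image (fun i _ j _ h => hinj m hm h)]

end ZnThreesAux2

section ZnThreesAux3

private lemma zthree_extract (n : ℕ) (A B : ℕ → ℂ)
    (h : ∀ x : ℂ, ∑ i ∈ range n, A i * x^(i+1) = ∑ i ∈ range n, B i * x^(i+1))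
    {i : ℕ} (hi : i < n) : A i = B i := by
  classical
  have hpoly : (∑ j ∈ range n, Polynomial.C (A j) * Polynomial.X^(j+1))
      = ∑ j ∈ range n, Polynomial.C (B j) * Polynomial.X^(j+1) := by
    apply Polynomial.funext
    intro z
    simpa [Polynomial.eval_finset_sum] using h z
  have h2 := congrArg (fun p => Polynomial.coeff p (i+1)) hpoly
  simp only [Polynomial.finset_sum_coeff, Polynomial.coeff_C_mul, Polynomial.coeff_X_pow] at h2
  have e : ∀ C : ℕ → ℂ, ∑ j ∈ range n, C j * (if i+1 = j+1 then (1:ℂ) else 0) = C i := by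
    intro C
    rw [Finset.sum_eq_single_of_mem i (Finset.mem_range.2 hi)]
    · simp
    · intro j _ hj
      simp [show ¬(i+1 = j+1) by omega, show i ≠ j by omega]
  rw [e A, e B] at h2
  exact h2

private lemma zthree_key (N : ℕ) (hN : 1 ≤ N) (ζ : ℂ) (hζ : IsPrimitiveRoot ζ (N+1)) (x : ℂ) :
    ∑ i ∈ range (N+1), ((((N+1 : ℕ) : ℂ))^3 *
        ∑ s ∈ Finset.powersetCard i (Finset.Ico 1 (N+1)), ∏ v ∈ s, (ζ^(2*v) / (1-ζ^v)^3)) * x^(i+1)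
    = ∑ i ∈ range (N+1), ((cP (N+1) i : ℂ) + (-1)^i * (cQ (N+1) i : ℂ)) * x^(i+1) := by
  classical
  by_cases hx0 : x = 0
  · simp [hx0]
  obtain ⟨a, b, c, habc⟩ := zthree_cubic_roots x
  have hra : a^3 - (3+x)*a^2 + 3*a - 1 = 0 := by linear_combination habc a
  have hrb : b^3 - (3+x)*b^2 + 3*b - 1 = 0 := by linear_combination habc b
  have hrc : c^3 - (3+x)*c^2 + 3*c - 1 = 0 := by linear_combination habc c
  have habc1 : a*b*c = 1 := by linear_combination habc 0
  have hx1 : (a-1)*(b-1)*(c-1) = x := by linear_combination habc 1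
  have he1 : a+b+c = 3+x := by
    linear_combination (habc 2)/2 - (habc 1) + (habc 0)/2
  have he2 : a*b+b*c+c*a = 3 := by
    linear_combination (habc 2)/2 + 3*(habc 0)/2 - 2*(habc 1)
  have hp2 : a^2+b^2+c^2 = x^2+6*x+3 := by
    linear_combination (a+b+c+3+x)*he1 - 2*he2
  have hq2 : (a*b)^2+(b*c)^2+(c*a)^2 = 3-2*x := by
    linear_combination (a*b+b*c+c*a+3)*he2 - 2*(a+b+c)*habc1 - 2*he1
  have ha0 : a ≠ 0 := fun h => by rw [h] at hra; simp at hra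
  have hb0 : b ≠ 0 := fun h => by rw [h] at hrb; simp at hrb
  have hc0 : c ≠ 0 := fun h => by rw [h] at hrc; simp at hrc
  have hab : a*b = c⁻¹ := by field_simp; linear_combination habc1
  have hbc : b*c = a⁻¹ := by field_simp; linear_combination habc1
  have hca : c*a = b⁻¹ := by field_simp; linear_combination habc1
  have hrab : (a*b)^3 - 3*(a*b)^2 + (3+x)*(a*b) - 1 = 0 := by
    rw [hab]; field_simp; linear_combination -hrc
  have hrbc : (b*c)^3 - 3*(b*c)^2 + (3+x)*(b*c) - 1 = 0 := by
    rw [hbc]; field_simp; linear_combination -hra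
  have hrca : (c*a)^3 - 3*(c*a)^2 + (3+x)*(c*a) - 1 = 0 := by
    rw [hca]; field_simp; linear_combination -hrb
  -- power sums equal the explicit series
  have hP3 : ∀ k, k+2 ≤ N+1 → (a^k+b^k+c^k = Pa (N+1) x k)
      ∧ (a^(k+1)+b^(k+1)+c^(k+1) = Pa (N+1) x (k+1))
      ∧ (a^(k+2)+b^(k+2)+c^(k+2) = Pa (N+1) x (k+2)) := by
    intro k
    induction k with
    | zero =>
        intro _
        refine ⟨?_, ?_, ?_⟩
        · rw [Pa_zero]; norm_num
        · rw [Pa_one _ (by omega)]; simpa using he1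
        · rw [Pa_two _ (by omega)]; linear_combination hp2
    | succ k ih =>
        intro hk
        obtain ⟨h0, h1, h2⟩ := ih (by omega)
        refine ⟨h1, h2, ?_⟩
        have : k+1+2 = k+3 := rfl
        rw [this, Pa_rec N x k (by omega), ← h0, ← h1, ← h2]
        linear_combination a^k * hra + b^k * hrb + c^k * hrc
  have hQ3 : ∀ k, k+2 ≤ N+1 → ((a*b)^k+(b*c)^k+(c*a)^k = Qa (N+1) x k)
      ∧ ((a*b)^(k+1)+(b*c)^(k+1)+(c*a)^(k+1) = Qa (N+1) x (k+1))
      ∧ ((a*b)^(k+2)+(b*c)^(k+2)+(c*a)^(k+2) = Qa (N+1) x (k+2)) := by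
    intro k
    induction k with
    | zero =>
        intro _
        refine ⟨?_, ?_, ?_⟩
        · rw [Qa_zero]; norm_num
        · rw [Qa_one]; simpa using he2
        · rw [Qa_two _ (by omega)]; linear_combination hq2
    | succ k ih =>
        intro hk
        obtain ⟨h0, h1, h2⟩ := ih (by omega)
        refine ⟨h1, h2, ?_⟩
        have : k+1+2 = k+3 := rfl
        rw [this, Qa_rec N x k (by omega), ← h0, ← h1, ← h2]
        linear_combination (a*b)^k * hrab + (b*c)^k * hrbc + (c*a)^k * hrca
  obtain ⟨M, rfl⟩ : ∃ M, N = M + 1 := ⟨N-1, by omega⟩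
  have hpn : a^(M+2)+b^(M+2)+c^(M+2) = Pa (M+2) x (M+2) := (hP3 M (by omega)).2.2
  have hqn : (a*b)^(M+2)+(b*c)^(M+2)+(c*a)^(M+2) = Qa (M+2) x (M+2) := (hQ3 M (by omega)).2.2
  -- geometric products
  have hGeom := fun z => zthree_geom_prod (M+2) (by omega) ζ hζ z
  have hprodn : ∏ m ∈ Finset.Ico 1 (M+2), ((1:ℂ) - ζ^m) = ((M+2 : ℕ) : ℂ) := by
    have := hGeom 1
    simpa using this
  have hne : ∀ m ∈ Finset.Ico 1 (M+2), (1:ℂ) - ζ^m ≠ 0 := by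
    intro m hm
    have h1 := Finset.mem_Ico.1 hm
    have := hζ.pow_ne_one_of_pos_of_lt (by omega) h1.2
    exact sub_ne_zero_of_ne (Ne.symm this)
  have hfac : ∀ m ∈ Finset.Ico 1 (M+2), ((1:ℂ)-ζ^m)^3 + x * ζ^(2*m) = (a - ζ^m)*(b - ζ^m)*(c - ζ^m) := by
    intro m hm
    have h2m : ζ^(2*m) = (ζ^m)^2 := by rw [mul_comm, pow_mul]
    rw [h2m]
    linear_combination -habc (ζ^m)
  have hEprod : (((M+2 : ℕ) : ℂ))^3 * ∏ m ∈ Finset.Ico 1 (M+2), (1 + x * (ζ^(2*m)/(1-ζ^m)^3))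
      = (∑ i ∈ range (M+2), a^i) * (∑ i ∈ range (M+2), b^i) * (∑ i ∈ range (M+2), c^i) := by
    rw [← hprodn, ← Finset.prod_pow, ← Finset.prod_mul_distrib]
    rw [Finset.prod_congr rfl (fun m hm => show (1-ζ^m)^3 * (1 + x * (ζ^(2*m)/(1-ζ^m)^3))
        = (a - ζ^m)*(b - ζ^m)*(c - ζ^m) from by
      rw [← hfac m hm]
      field_simp [hne m hm])]
    rw [Finset.prod_mul_distrib, Finset.prod_mul_distrib, hGeom a, hGeom b, hGeom c]
  have hABC : x * ((∑ i ∈ range (M+2), a^i) * (∑ i ∈ range (M+2), b^i) * (∑ i ∈ range (M+2), c^i))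
      = Pa (M+2) x (M+2) - Qa (M+2) x (M+2) := by
    have fa := geom_sum_mul a (M+2)
    have fb := geom_sum_mul b (M+2)
    have fc := geom_sum_mul c (M+2)
    have h1 : a^(M+2) * (b^(M+2) * c^(M+2)) = 1 := by
      have h2 : (a*(b*c))^(M+2) = 1 := by
        rw [show a*(b*c) = 1 by linear_combination habc1, one_pow]
      rw [mul_pow, mul_pow] at h2; exact h2
    have step1 : x * ((∑ i ∈ range (M+2), a^i) * (∑ i ∈ range (M+2), b^i) * (∑ i ∈ range (M+2), c^i))
        = (a^(M+2)-1)*(b^(M+2)-1)*(c^(M+2)-1) := by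
      rw [← fa, ← fb, ← fc]
      linear_combination (-((∑ i ∈ range (M+2), a^i) * (∑ i ∈ range (M+2), b^i) * (∑ i ∈ range (M+2), c^i))) * hx1
    rw [step1, ← hpn, ← hqn]
    linear_combination h1
  -- expansion of the product as a polynomial in x
  have hexp : ∏ m ∈ Finset.Ico 1 (M+2), (1 + x * (ζ^(2*m)/(1-ζ^m)^3))
      = ∑ i ∈ range (M+2), (∑ s ∈ Finset.powersetCard i (Finset.Ico 1 (M+2)),
          ∏ v ∈ s, (ζ^(2*v)/(1-ζ^v)^3)) * x^i := by
    have h0 : ∏ m ∈ Finset.Ico 1 (M+2), (1 + x * (ζ^(2*m)/(1-ζ^m)^3))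
        = ∏ m ∈ Finset.Ico 1 (M+2), ((fun m => x * (ζ^(2*m)/(1-ζ^m)^3)) m + (fun _ => (1:ℂ)) m) :=
      Finset.prod_congr rfl fun m _ => by ring
    rw [h0, Finset.prod_add, Finset.sum_powerset]
    have hcard : (Finset.Ico 1 (M+2)).card + 1 = M+2 := by rw [Nat.card_Ico]; omega
    rw [hcard]
    refine Finset.sum_congr rfl fun j hj => ?_
    rw [Finset.sum_mul]
    refine Finset.sum_congr rfl fun t ht => ?_
    have hct : t.card = j := (Finset.mem_powersetCard.1 ht).2
    rw [Finset.prod_const_one, mul_one, Finset.prod_mul_distrib, Finset.prod_const, hct]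
    ring
  -- chain everything
  have lhs_eq : ∑ i ∈ range (M+2), ((((M+2 : ℕ) : ℂ))^3 *
        ∑ s ∈ Finset.powersetCard i (Finset.Ico 1 (M+2)), ∏ v ∈ s, (ζ^(2*v) / (1-ζ^v)^3)) * x^(i+1)
      = x * ((((M+2 : ℕ) : ℂ))^3 * ∏ m ∈ Finset.Ico 1 (M+2), (1 + x * (ζ^(2*m)/(1-ζ^m)^3))) := by
    rw [hexp, Finset.mul_sum, Finset.mul_sum]
    refine Finset.sum_congr rfl fun i _ => ?_
    ring
  rw [lhs_eq, hEprod, hABC, Pa, Qa]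
  rw [show (3:ℂ) + (∑ i ∈ range (M+2), x^(i+1) * (cP (M+2) i : ℂ))
      - (3 + ∑ i ∈ range (M+2), (-x)^(i+1) * (cQ (M+2) i : ℂ))
      = ∑ i ∈ range (M+2), (x^(i+1) * (cP (M+2) i : ℂ) - (-x)^(i+1) * (cQ (M+2) i : ℂ)) from by
    rw [Finset.sum_sub_distrib]; ring]
  refine Finset.sum_congr rfl fun i _ => ?_
  have hneg : (-x)^(i+1) = (-1)^(i+1) * x^(i+1) := by rw [neg_pow]
  rw [hneg, pow_succ]
  ring

end ZnThreesAux3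

/-- evaluation of `z_n({3}^r; ζ_n)`. -/
theorem zn_threes_eval (n : ℕ) (hn : 0 < n) (ζ : ℂ) (hζ : IsPrimitiveRoot ζ n)
    (r : ℕ) (hr : 1 ≤ r) :
    z n (fun _ : Fin r => 3) ζ =
      (1 / ((n : ℂ) ^ 2 * ((r : ℂ) + 1))) *
        (((n + 2 * r + 1).choose (3 * r + 2) : ℂ) +
          (-1 : ℂ) ^ r * ((n + r).choose (3 * r + 2) : ℂ)) *
        (1 - ζ) ^ (3 * r) := by
  classical
  by_cases hn1 : n = 1
  · subst hn1
    have hζ1 : ζ = 1 := by simpa using hζ.pow_eq_one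
    have hz : z 1 (fun _ : Fin r => 3) ζ = 0 := by
      rw [z]
      have hempty : msets 1 r = ∅ := by
        rw [msets]
        ext m
        simp only [Finset.mem_filter, Finset.mem_univ, true_and, Finset.notMem_empty, iff_false]
        rintro ⟨-, hpos⟩
        have h1 := hpos ⟨0, hr⟩
        have h2 : (m ⟨0, hr⟩ : ℕ) < 1 := (m _).isLt
        omega
      rw [hempty, Finset.sum_empty]
    rw [hz, hζ1]
    rw [show (1:ℂ) - 1 = 0 by ring, zero_pow (by omega : 3*r ≠ 0)]
    ring
  obtain ⟨N, rfl⟩ : ∃ N, n = N + 1 := ⟨n-1, by omega⟩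
  have hN : 1 ≤ N := by omega
  -- Step A : strip off the power of (1-ζ)
  have hζne1 : ζ ≠ 1 := hζ.ne_one (by omega)
  have hstepA : z (N+1) (fun _ : Fin r => 3) ζ
      = (1-ζ)^(3*r) * ∑ s ∈ Finset.powersetCard r (Finset.Ico 1 (N+1)),
          ∏ v ∈ s, (ζ^(2*v) / (1-ζ^v)^3) := by
    rw [z, ← zthree_sum_msets (N+1) r (fun v => ζ^(2*v) / (1-ζ^v)^3), Finset.mul_sum]
    refine Finset.sum_congr rfl fun m hm => ?_
    have hterm : ∀ i : Fin r, ζ ^ (((fun _ : Fin r => 3) i - 1) * (m i : ℕ))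
          / ((1 - ζ ^ (m i : ℕ)) / (1 - ζ)) ^ ((fun _ : Fin r => 3) i)
        = (1-ζ)^3 * (ζ^(2*(m i : ℕ)) / (1 - ζ^(m i : ℕ))^3) := by
      intro i
      show ζ ^ ((3-1) * (m i : ℕ)) / ((1 - ζ ^ (m i:ℕ)) / (1 - ζ)) ^ 3
        = (1-ζ)^3 * (ζ^(2*(m i:ℕ)) / (1 - ζ^(m i:ℕ))^3)
      have h2 : (3-1 : ℕ) = 2 := rfl
      rw [h2, div_pow]
      by_cases hA : (1 - ζ^(m i : ℕ)) = 0
      · rw [hA]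
        norm_num
      · have hB : (1:ℂ) - ζ ≠ 0 := sub_ne_zero_of_ne (Ne.symm hζne1)
        field_simp
    rw [Finset.prod_congr rfl (fun i _ => hterm i), Finset.prod_mul_distrib, Finset.prod_const]
    rw [Finset.card_univ, Fintype.card_fin, ← pow_mul]
  by_cases hrn : N+1 ≤ r
  · -- degenerate case : both sides vanish
    have hE0 : Finset.powersetCard r (Finset.Ico 1 (N+1)) = ∅ := by
      apply Finset.powersetCard_eq_empty.2
      rw [Nat.card_Ico]
      omega
    have c1 : (N+1+2*r+1).choose (3*r+2) = 0 := Nat.choose_eq_zero_of_lt (by omega)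
    have c2 : (N+1+r).choose (3*r+2) = 0 := Nat.choose_eq_zero_of_lt (by omega)
    rw [hstepA, hE0, c1, c2]
    simp
  -- main case
  have hrN : r < N+1 := by omega
  have hkey := zthree_key N hN ζ hζ
  have hAB := zthree_extract (N+1)
      (fun i => (((N+1 : ℕ) : ℂ))^3 *
        ∑ s ∈ Finset.powersetCard i (Finset.Ico 1 (N+1)), ∏ v ∈ s, (ζ^(2*v) / (1-ζ^v)^3))
      (fun i => (cP (N+1) i : ℂ) + (-1)^i * (cQ (N+1) i : ℂ))
      hkey hrN
  -- arithmetic with binomial coefficients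
  have I1 : (r+1) * cP (N+1) r = (N+1) * ((N+1+2*r+1).choose (3*r+2)) := by
    have key := Nat.choose_succ_right_eq (N+1+2*r+1) (3*r+2)
    have hsub : N+1+2*r+1 - (3*r+2) = N - r := by omega
    rw [hsub] at key
    rw [cP]
    have hrle : r ≤ N := by omega
    zify [hrle] at key ⊢
    linear_combination key
  have I2 : (r+1) * cQ (N+1) r = (N+1) * ((N+1+r).choose (3*r+2)) := by
    by_cases h2r : 2*r+1 ≤ N
    · have key := Nat.choose_succ_right_eq (N+1+r) (3*r+2)
      have hsub : N+1+r - (3*r+2) = N - (2*r+1) := by omega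
      rw [hsub] at key
      rw [cQ]
      have hrle : 2*r+1 ≤ N := h2r
      zify [hrle] at key ⊢
      linear_combination key
    · have c1 : (N+1+r).choose (3*r+2) = 0 := Nat.choose_eq_zero_of_lt (by omega)
      have c2 : (N+1+r).choose (3*r+3) = 0 := Nat.choose_eq_zero_of_lt (by omega)
      rw [cQ, c1, c2]
      ring
  have hn0 : ((N+1 : ℕ) : ℂ) ≠ 0 := Nat.cast_ne_zero.2 (by omega)
  have hr0 : ((r : ℕ) : ℂ) + 1 ≠ 0 := Nat.cast_add_one_ne_zero r
  rw [hstepA]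
  have hI1 : ((r:ℂ)+1) * (cP (N+1) r : ℂ) = ((N+1 : ℕ) : ℂ) * ((N+1+2*r+1).choose (3*r+2) : ℂ) := by
    exact_mod_cast congrArg (Nat.cast : ℕ → ℂ) I1
  have hI2 : ((r:ℂ)+1) * (cQ (N+1) r : ℂ) = ((N+1 : ℕ) : ℂ) * ((N+1+r).choose (3*r+2) : ℂ) := by
    exact_mod_cast congrArg (Nat.cast : ℕ → ℂ) I2
  -- finish by field arithmetic
  have hD : (((N+1 : ℕ) : ℂ))^2 * ((r : ℂ) + 1) ≠ 0 :=
    mul_ne_zero (pow_ne_zero _ hn0) hr0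
  have hcube : (((N+1 : ℕ) : ℂ))^3 ≠ 0 := pow_ne_zero _ hn0
  have hEval : ∑ s ∈ Finset.powersetCard r (Finset.Ico 1 (N+1)), ∏ v ∈ s, (ζ^(2*v) / (1-ζ^v)^3)
      = (((N+1 + 2 * r + 1).choose (3 * r + 2) : ℂ) +
          (-1 : ℂ) ^ r * ((N+1 + r).choose (3 * r + 2) : ℂ))
        / ((((N+1 : ℕ) : ℂ)) ^ 2 * ((r : ℂ) + 1)) := by
    have hS : ∑ s ∈ Finset.powersetCard r (Finset.Ico 1 (N+1)), ∏ v ∈ s, (ζ^(2*v) / (1-ζ^v)^3)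
        = ((cP (N+1) r : ℂ) + (-1)^r * (cQ (N+1) r : ℂ)) / (((N+1 : ℕ) : ℂ))^3 := by
      rw [← hAB]
      exact (mul_div_cancel_left₀ _ hcube).symm
    rw [hS, div_eq_div_iff hcube hD]
    linear_combination (((N+1:ℕ):ℂ))^2 * ((r:ℂ)+1) * hI1 * 0
      + (((N+1:ℕ):ℂ))^2 * hI1 + (((N+1:ℕ):ℂ))^2 * (-1:ℂ)^r * hI2
  rw [hEval]
  push_cast
  ring
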